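/- For any real x ≥ 1 and any ε with 0 < ε ≤ 1, ∫₀^ε √(x + log(1/u)) du ≤ 2ε·√(x + log(1/ε)). -/

import Mathlib

open MeasureTheory

lemma log_le_two_div_e_mul_sqrt {t : ℝ} (ht : 0 < t) :
    Real.log t ≤ 2 / Real.exp 1 * Real.sqrt t := by
  have hst : 0 < Real.sqrt t := Real.sqrt_pos.mpr ht
  have h1 : Real.log (Real.sqrt t / Real.exp 1) ≤ Real.sqrt t / Real.exp 1 - 1 :=
    Real.log_le_sub_one_of_pos (by positivity)
  have h2 : Real.log (Real.sqrt t / Real.exp 1)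
      = Real.log (Real.sqrt t) - 1 := by
    rw [Real.log_div hst.ne' (Real.exp_ne_zero 1), Real.log_exp]
  have h3 : Real.log t = 2 * Real.log (Real.sqrt t) := by
    rw [Real.log_sqrt ht.le]; ring
  rw [h3]
  have : Real.log (Real.sqrt t) ≤ Real.sqrt t / Real.exp 1 := by linarith [h1, h2.symm.le]
  calc 2 * Real.log (Real.sqrt t) ≤ 2 * (Real.sqrt t / Real.exp 1) := by linarith
    _ = 2 / Real.exp 1 * Real.sqrt t := by ring

theorem integral_sqrt_add_log_inv_le (x : ℝ) (hx : 1 ≤ x) (ε : ℝ) (hε0 : 0 < ε) (hε1 : ε ≤ 1) :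
    (∫ u in Set.Ioc (0:ℝ) ε, Real.sqrt (x + Real.log (1 / u))) ≤
      2 * ε * Real.sqrt (x + Real.log (1 / ε)) := by
  set A : ℝ := x + Real.log (1 / ε) with hA
  have hlogε : 0 ≤ Real.log (1 / ε) := by
    apply Real.log_nonneg
    exact one_le_one_div hε0 hε1
  have hA1 : 1 ≤ A := by rw [hA]; linarith
  have hsA1 : 1 ≤ Real.sqrt A := by
    rw [show (1:ℝ) = Real.sqrt 1 by simp]
    exact Real.sqrt_le_sqrt hA1
  have he2 : (2:ℝ) ≤ Real.exp 1 := by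
    have := Real.add_one_le_exp (1:ℝ); linarith
  set g : ℝ → ℝ := fun u => Real.sqrt A + Real.sqrt ε / Real.exp 1 * u ^ (-(1/2) : ℝ) with hg
  -- pointwise bound
  have hbound : ∀ u ∈ Set.Ioc (0:ℝ) ε, Real.sqrt (x + Real.log (1 / u)) ≤ g u := by
    intro u hu
    obtain ⟨hu0, huε⟩ := hu
    set s : ℝ := Real.log (ε / u) with hs
    have hs0 : 0 ≤ s := Real.log_nonneg ((le_div_iff₀ hu0).mpr (by linarith))
    have hkey : x + Real.log (1 / u) = A + s := by
      rw [hA, hs, Real.log_div hε0.ne' hu0.ne', one_div, Real.log_inv, one_div, Real.log_inv]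
      ring
    have h1 : Real.sqrt (A + s) ≤ Real.sqrt A + s / 2 := by
      have hsq : A + s ≤ (Real.sqrt A + s / 2) ^ 2 := by
        have hAs : A = Real.sqrt A ^ 2 := (Real.sq_sqrt (by linarith)).symm
        clear_value s A
        nlinarith [hs0, hsA1, Real.sqrt_nonneg A, sq_nonneg s,
          mul_le_mul_of_nonneg_left hsA1 hs0]
      calc Real.sqrt (A + s) ≤ Real.sqrt ((Real.sqrt A + s / 2) ^ 2) := Real.sqrt_le_sqrt hsq
        _ = Real.sqrt A + s / 2 := Real.sqrt_sq (by positivity)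
    have h2 : s / 2 ≤ Real.sqrt ε / Real.exp 1 * u ^ (-(1/2) : ℝ) := by
      have hlog : s ≤ 2 / Real.exp 1 * Real.sqrt (ε / u) :=
        log_le_two_div_e_mul_sqrt (by positivity)
      have hrw : Real.sqrt (ε / u) = Real.sqrt ε * u ^ (-(1/2) : ℝ) := by
        rw [Real.sqrt_div hε0.le, div_eq_mul_inv, Real.rpow_neg hu0.le,
          ← Real.sqrt_eq_rpow]
      rw [hrw] at hlog
      have hexp : 0 < Real.exp 1 := Real.exp_pos 1
      calc s / 2 ≤ (2 / Real.exp 1 * (Real.sqrt ε * u ^ (-(1/2) : ℝ))) / 2 := by linarith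
        _ = Real.sqrt ε / Real.exp 1 * u ^ (-(1/2) : ℝ) := by field_simp
    rw [hkey]
    calc Real.sqrt (A + s) ≤ Real.sqrt A + s / 2 := h1
      _ ≤ g u := by simpa [hg] using h2
  -- integrability of g
  have hg_int : IntegrableOn g (Set.Ioc (0:ℝ) ε) := by
    apply Integrable.add
    · exact (integrableOn_const_iff).mpr (Or.inr (by simp [hε0.le]))
    · apply Integrable.const_mul
      have := (intervalIntegral.intervalIntegrable_rpow' (a := 0) (b := ε)
        (r := -(1/2)) (by norm_num))
      rwa [intervalIntegrable_iff_integrableOn_Ioc_of_le hε0.le] at this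
  -- integrability of f
  have hf_int : IntegrableOn (fun u => Real.sqrt (x + Real.log (1 / u)))
      (Set.Ioc (0:ℝ) ε) := by
    refine MeasureTheory.Integrable.mono hg_int ?_ ?_
    · apply Measurable.aestronglyMeasurable
      apply Real.continuous_sqrt.measurable.comp
      exact measurable_const.add
        (Real.measurable_log.comp (measurable_const.div measurable_id))
    · rw [ae_restrict_iff' measurableSet_Ioc]
      filter_upwards with u hu
      rw [Real.norm_eq_abs, Real.norm_eq_abs, abs_of_nonneg (Real.sqrt_nonneg _)]
      exact (hbound u hu).trans (le_abs_self _)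
  have hmono : (∫ u in Set.Ioc (0:ℝ) ε, Real.sqrt (x + Real.log (1 / u)))
      ≤ ∫ u in Set.Ioc (0:ℝ) ε, g u :=
    setIntegral_mono_on hf_int hg_int measurableSet_Ioc hbound
  -- compute ∫ g
  have hrpow_int : (∫ u in Set.Ioc (0:ℝ) ε, u ^ (-(1/2) : ℝ)) = 2 * Real.sqrt ε := by
    rw [← intervalIntegral.integral_of_le hε0.le,
      integral_rpow (Or.inl (by norm_num))]
    rw [Real.zero_rpow (by norm_num), Real.sqrt_eq_rpow]
    norm_num
    ring
  have hg_val : (∫ u in Set.Ioc (0:ℝ) ε, g u)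
      = ε * Real.sqrt A + Real.sqrt ε / Real.exp 1 * (2 * Real.sqrt ε) := by
    have hrpow_intg : IntegrableOn (fun u : ℝ => u ^ (-(1/2) : ℝ)) (Set.Ioc 0 ε) := by
      have := (intervalIntegral.intervalIntegrable_rpow' (a := 0) (b := ε)
        (r := -(1/2)) (by norm_num))
      rwa [intervalIntegrable_iff_integrableOn_Ioc_of_le hε0.le] at this
    rw [hg, integral_add ((integrableOn_const_iff (C := Real.sqrt A) (s := Set.Ioc (0:ℝ) ε) (μ := volume)).mpr (Or.inr (by simp [hε0.le])))
      (hrpow_intg.const_mul _)]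
    rw [setIntegral_const, integral_const_mul, hrpow_int]
    simp [Real.volume_Ioc, ENNReal.toReal_ofReal hε0.le, smul_eq_mul, hε0.le]
  have hsqsq : Real.sqrt ε * Real.sqrt ε = ε := Real.mul_self_sqrt hε0.le
  have hfinal : ε * Real.sqrt A + Real.sqrt ε / Real.exp 1 * (2 * Real.sqrt ε)
      ≤ 2 * ε * Real.sqrt A := by
    have h1 : Real.sqrt ε / Real.exp 1 * (2 * Real.sqrt ε) = 2 * ε / Real.exp 1 := by
      field_simp; nlinarith [hsqsq]
    rw [h1]
    have h2 : 2 * ε / Real.exp 1 ≤ ε := by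
      rw [div_le_iff₀ (Real.exp_pos 1)]
      nlinarith
    nlinarith [hsA1, hε0]
  calc (∫ u in Set.Ioc (0:ℝ) ε, Real.sqrt (x + Real.log (1 / u)))
      ≤ ∫ u in Set.Ioc (0:ℝ) ε, g u := hmono
    _ = ε * Real.sqrt A + Real.sqrt ε / Real.exp 1 * (2 * Real.sqrt ε) := hg_val
    _ ≤ 2 * ε * Real.sqrt A := hfinal
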